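/- Monotonicity of the Turing region: let J(x) be a continuous family of real 2×2 matrices on [0,1] with tr(J(x)) < 0 and det(J(x)) > 0 everywhere, D = diag(1,d) with 0 < d < 1, B_λ(x) = D⁻¹(J(x) - λI), and define T_λ = {x ∈ [0,1] : tr(B_λ(x)) > 0 and tr(B_λ(x))² - 4 det(B_λ(x)) ≥ 0}. Then for 0 ≤ λ₁ ≤ λ₂, T_{λ₂} ⊆ T_{λ₁}. -/
import Mathlib


open Matrix

/-- The diffusion matrix D = diag(1, d). -/
noncomputable def Dmat (d : ℝ) : Matrix (Fin 2) (Fin 2) ℝ := !![1, 0; 0, d]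

/-- B_λ(x) = D⁻¹ (J(x) - λ I). -/
noncomputable def Bmat (J : Matrix (Fin 2) (Fin 2) ℝ) (d lam : ℝ) :
    Matrix (Fin 2) (Fin 2) ℝ := (Dmat d)⁻¹ * (J - lam • 1)

/-- The Turing region T_λ. -/
noncomputable def TuringRegion (J : ℝ → Matrix (Fin 2) (Fin 2) ℝ) (d lam : ℝ) :
    Set ℝ :=
  {x ∈ Set.Icc (0 : ℝ) 1 | 0 < (Bmat (J x) d lam).trace ∧
    0 ≤ (Bmat (J x) d lam).trace ^ 2 - 4 * (Bmat (J x) d lam).det}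

lemma Dmat_inv (d : ℝ) (hd : d ≠ 0) : (Dmat d)⁻¹ = !![1, 0; 0, d⁻¹] := by
  apply Matrix.inv_eq_right_inv
  unfold Dmat
  ext i j
  fin_cases i <;> fin_cases j <;>
    simp [Matrix.mul_apply, Fin.sum_univ_two, Matrix.one_apply, hd]

lemma traceB (M : Matrix (Fin 2) (Fin 2) ℝ) (d lam : ℝ) (hd : d ≠ 0) :
    (Bmat M d lam).trace = (M 0 0 - lam) + (M 1 1 - lam) / d := by
  unfold Bmat
  rw [Dmat_inv d hd, Matrix.trace_fin_two]
  simp [Matrix.mul_apply, Fin.sum_univ_two, Matrix.one_apply]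
  ring

lemma detB (M : Matrix (Fin 2) (Fin 2) ℝ) (d lam : ℝ) (hd : d ≠ 0) :
    (Bmat M d lam).det = ((M 0 0 - lam) * (M 1 1 - lam) - M 0 1 * M 1 0) / d := by
  unfold Bmat
  rw [Dmat_inv d hd, Matrix.det_fin_two]
  simp [Matrix.mul_apply, Fin.sum_univ_two, Matrix.one_apply]
  ring

theorem stmt14 (J : ℝ → Matrix (Fin 2) (Fin 2) ℝ) (hJ : Continuous J)
    (d : ℝ) (hd : 0 < d) (hd1 : d < 1)
    (htr : ∀ y ∈ Set.Icc (0 : ℝ) 1, (J y).trace < 0)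
    (hdet : ∀ y ∈ Set.Icc (0 : ℝ) 1, 0 < (J y).det)
    (lam₁ lam₂ : ℝ) (h₁ : 0 ≤ lam₁) (h₁₂ : lam₁ ≤ lam₂) :
    TuringRegion J d lam₂ ⊆ TuringRegion J d lam₁ := by
  intro x hx
  obtain ⟨hx1, htr2, hP2⟩ := hx
  have hd0 : d ≠ 0 := ne_of_gt hd
  have ha := htr x hx1
  have hD := hdet x hx1
  rw [Matrix.trace_fin_two] at ha
  rw [Matrix.det_fin_two] at hD
  simp only [TuringRegion, Set.mem_setOf_eq] at hP2 ⊢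
  rw [traceB _ _ _ hd0] at htr2
  rw [traceB _ _ _ hd0, detB _ _ _ hd0] at hP2
  rw [traceB (J x) d lam₁ hd0, detB (J x) d lam₁ hd0]
  set a := J x 0 0
  set b := J x 0 1
  set c := J x 1 0
  set e := J x 1 1
  refine ⟨hx1, ?_, ?_⟩
  · -- trace positivity
    have h1 : 0 < (a - lam₂) + (e - lam₂) / d := htr2
    have key : (a - lam₂) + (e - lam₂) / d ≤ (a - lam₁) + (e - lam₁) / d := by
      have h2 : (e - lam₂) / d ≤ (e - lam₁) / d := by
        apply (div_le_div_iff_of_pos_right hd).mpr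
        linarith
      linarith
    linarith
  · -- discriminant
    have ht1 : 0 < (a - lam₁) + (e - lam₁) / d := by
      have h2 : (e - lam₂) / d ≤ (e - lam₁) / d := by
        apply (div_le_div_iff_of_pos_right hd).mpr
        linarith
      linarith
    have ht12 : (a - lam₂) + (e - lam₂) / d ≤ (a - lam₁) + (e - lam₁) / d := by
      have h2 : (e - lam₂) / d ≤ (e - lam₁) / d := by
        apply (div_le_div_iff_of_pos_right hd).mpr
        linarith
      linarith
    have hsq : ((a - lam₂) + (e - lam₂) / d) ^ 2 ≤ ((a - lam₁) + (e - lam₁) / d) ^ 2 := by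
      nlinarith
    have hdet12 : ((a - lam₁) * (e - lam₁) - b * c) / d ≤
        ((a - lam₂) * (e - lam₂) - b * c) / d := by
      rw [div_le_div_iff₀ hd hd]
      nlinarith [mul_nonneg (mul_nonneg (sub_nonneg.mpr h₁₂)
        (show (0:ℝ) ≤ lam₁ + lam₂ - a - e by linarith)) hd.le]
    linarith
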